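/- Let $F_n$ be the Fibonacci numbers ($F_1 = F_2 = 1$, $F_n = F_{n-1}+F_{n-2}$) and $L_n$ the Lucas numbers ($L_1 = 1$, $L_2 = 3$, $L_n = L_{n-1}+L_{n-2}$). Then $\sum_{n\ge 0} F_{n+1} q^n = \prod_{n\ge 1}(1-q^n)^{-a_n}$, where $a_n = \frac{1}{n}\sum_{d\mid n} \mu(n/d) L_d$. -/

import Mathlib

open Finset PowerSeries ArithmeticFunction

/-- The rising factorial `(a)_k = a(a+1)⋯(a+k-1)`. -/
noncomputable def risingFact (a : ℝ) (k : ℕ) : ℝ := ∏ j ∈ Finset.range k, (a + j)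

/-- The binomial-series expansion of `(1-q^n)^{-a n}`. -/
noncomputable def binomFactor (a : ℕ → ℝ) (n : ℕ) : PowerSeries ℝ :=
  PowerSeries.mk fun k =>
    if n ∣ k then risingFact (a n) (k / n) / (Nat.factorial (k / n)) else 0

namespace Stmt12Aux

/-- `(1-X^n)⁻¹`. -/
noncomputable def invF (n : ℕ) : PowerSeries ℝ :=
  PowerSeries.mk fun j => if n ∣ j then (1:ℝ) else 0

lemma coeff_X_pow_mul' (f : PowerSeries ℝ) (n k : ℕ) :
    coeff k (X ^ n * f) = if n ≤ k then coeff (k - n) f else 0 := by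
  by_cases h : n ≤ k
  · rw [if_pos h]
    conv_lhs => rw [show k = (k - n) + n by omega]
    exact coeff_X_pow_mul f n (k - n)
  · rw [if_neg h, coeff_mul]
    apply Finset.sum_eq_zero
    rintro ⟨i, j⟩ hij
    rw [Finset.HasAntidiagonal.mem_antidiagonal] at hij
    rw [coeff_X_pow, if_neg (by omega), zero_mul]

lemma one_sub_X_pow_mul_invF (n : ℕ) (hn : 1 ≤ n) :
    (1 - X ^ n) * invF n = 1 := by
  ext k
  rw [sub_mul, one_mul, map_sub, coeff_X_pow_mul', invF, coeff_mk, coeff_mk, coeff_one]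
  rcases Nat.eq_zero_or_pos k with rfl | hk
  · rw [if_pos (dvd_zero n), if_neg (by omega), if_pos rfl]; ring
  · rw [if_neg (Nat.pos_iff_ne_zero.mp hk)]
    by_cases h : n ∣ k
    · have h1 : n ≤ k := Nat.le_of_dvd hk h
      rw [if_pos h, if_pos h1, if_pos (Nat.dvd_sub h dvd_rfl), sub_self]
    · rw [if_neg h]
      split_ifs with h1 h2
      · exact absurd (by have := Nat.dvd_add h2 (dvd_refl n)
                         rwa [Nat.sub_add_cancel h1] at this) h
      · ring
      · ring

end Stmt12Aux

namespace Stmt12Aux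

lemma key (t : ℝ) (j : ℕ) :
    risingFact t (j+1) / (Nat.factorial (j+1)) * ((j:ℝ)+1) = (t + j) * (risingFact t j / (Nat.factorial j)) := by
  rw [risingFact, Finset.prod_range_succ, ← risingFact, Nat.factorial_succ]
  have h1 : (Nat.factorial j : ℝ) ≠ 0 := Nat.cast_ne_zero.mpr (Nat.factorial_ne_zero j)
  have h2 : ((j:ℝ)+1) ≠ 0 := by positivity
  push_cast
  field_simp

lemma ode (a : ℕ → ℝ) (n : ℕ) (hn : 1 ≤ n) :
    (1 - X ^ n) * d⁄dX ℝ (binomFactor a n)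
      = C ((n : ℝ) * a n) * (X ^ (n-1) * binomFactor a n) := by
  set t := a n with ht
  ext k
  rw [sub_mul, one_mul, map_sub, coeff_X_pow_mul', coeff_C_mul, coeff_X_pow_mul']
  simp only [coeff_derivative, binomFactor, coeff_mk, ← ht]
  by_cases hm : n ∣ (k+1)
  · obtain ⟨J, hJ⟩ := hm
    have hJ1 : 1 ≤ J := by
      rcases Nat.eq_zero_or_pos J with rfl | h; · omega
      · exact h
    rcases Nat.lt_or_ge J 2 with hJ2 | hJ2
    · -- J = 1, k + 1 = n
      have hJe : J = 1 := by omega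
      have hkn : k + 1 = n := by rw [hJ, hJe, mul_one]
      have hB : ¬ n ≤ k := by omega
      have hC : n - 1 ≤ k := by omega
      have hC0 : k - (n-1) = 0 := by omega
      rw [if_pos ⟨J, hJ⟩, if_neg hB, if_pos hC, hC0]
      rw [if_pos (dvd_zero n), Nat.zero_div]
      have hq : (k+1)/n = 1 := by rw [hkn, Nat.div_self (by omega)]
      rw [hq]
      have hc : (k:ℝ) + 1 = n := by exact_mod_cast congrArg (Nat.cast (R := ℝ)) hkn
      simp only [risingFact, Finset.prod_range_one, Finset.prod_range_zero,
        Nat.factorial_one, Nat.factorial_zero]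
      rw [sub_zero, hc]
      push_cast
      ring
    · -- J ≥ 2, set j = J - 1 ≥ 1
      obtain ⟨j, rfl⟩ : ∃ j, J = j + 1 := ⟨J - 1, by omega⟩
      have hj1 : 1 ≤ j := by omega
      have hp : k + 1 = n * j + n := by rw [hJ]; ring
      have hpn : n ≤ n * j := Nat.le_mul_of_pos_right n (by omega)
      have hB : n ≤ k := by omega
      have hs1 : k - n + 1 = n * j := by omega
      have hC : n - 1 ≤ k := by omega
      have hs2 : k - (n-1) = n * j := by omega
      have hq1 : (k+1)/n = j + 1 := by rw [hJ, Nat.mul_div_cancel_left _ (by omega)]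
      have hq2 : (n*j)/n = j := Nat.mul_div_cancel_left _ (by omega)
      rw [if_pos ⟨j+1, hJ⟩, if_pos hB, hs1, if_pos ⟨j, rfl⟩, if_pos hC, hs2,
        if_pos ⟨j, rfl⟩, hq1, hq2]
      have hc1 : (k:ℝ) + 1 = (n:ℝ) * ((j:ℝ)+1) := by exact_mod_cast congrArg (Nat.cast (R := ℝ)) hJ
      have hc2 : ((k - n : ℕ):ℝ) + 1 = (n:ℝ) * (j:ℝ) := by
        have : (k - n : ℕ) + 1 = n * j := hs1
        exact_mod_cast congrArg (Nat.cast (R := ℝ)) this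
      rw [hc1, hc2]
      linear_combination (n:ℝ) * key t j
  · rw [if_neg hm, zero_mul]
    have e1 : ∀ x : ℝ, (if n ≤ k then
        (if n ∣ k - n + 1 then x else 0) * (((k-n:ℕ):ℝ)+1) else 0) = 0 := by
      intro x
      by_cases hB : n ≤ k
      · rw [if_pos hB, if_neg, zero_mul]
        intro hd
        exact hm (by have := Nat.dvd_add hd (dvd_refl n)
                     have he : k - n + 1 + n = k + 1 := by omega
                     rwa [he] at this)
      · rw [if_neg hB]
    have e2 : ∀ x : ℝ, (if n - 1 ≤ k then (if n ∣ k - (n-1) then x else 0) else 0) = 0 := by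
      intro x
      by_cases hC : n - 1 ≤ k
      · rw [if_pos hC, if_neg]
        intro hd
        exact hm (by have := Nat.dvd_add hd (dvd_refl n)
                     have he : k - (n-1) + n = k + 1 := by omega
                     rwa [he] at this)
      · rw [if_neg hC]
    rw [e1, e2, mul_zero, sub_zero]

end Stmt12Aux

namespace Stmt12Aux

noncomputable def g (a : ℕ → ℝ) (n : ℕ) : PowerSeries ℝ :=
  C ((n:ℝ) * a n) * (X^(n-1) * invF n)

lemma deriv_binomFactor (a : ℕ → ℝ) (n : ℕ) (hn : 1 ≤ n) :
    d⁄dX ℝ (binomFactor a n) = g a n * binomFactor a n := by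
  have h := ode a n hn
  have hinv := one_sub_X_pow_mul_invF n hn
  calc d⁄dX ℝ (binomFactor a n)
      = (invF n * (1 - X^n)) * d⁄dX ℝ (binomFactor a n) := by
        rw [mul_comm (invF n), hinv, one_mul]
    _ = invF n * ((1-X^n) * d⁄dX ℝ (binomFactor a n)) := by ring
    _ = invF n * (C ((n:ℝ)*a n) * (X^(n-1) * binomFactor a n)) := by rw [h]
    _ = g a n * binomFactor a n := by rw [g]; ring

lemma coeff_g (a : ℕ → ℝ) (n : ℕ) (hn : 1 ≤ n) (k : ℕ) :
    coeff k (g a n) = if n ∣ (k+1) then (n:ℝ) * a n else 0 := by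
  rw [g, coeff_C_mul, coeff_X_pow_mul']
  by_cases h : n ∣ k+1
  · have h1 : n ≤ k+1 := Nat.le_of_dvd (by omega) h
    have hd : n ∣ k - (n-1) := by
      have h2 : n ∣ (k+1) - n := Nat.dvd_sub h dvd_rfl
      rwa [show k+1-n = k-(n-1) by omega] at h2
    rw [if_pos (show n-1 ≤ k by omega), invF, coeff_mk, if_pos hd, if_pos h, mul_one]
  · rw [if_neg h]
    by_cases hC : n-1 ≤ k
    · rw [if_pos hC, invF, coeff_mk, if_neg, mul_zero]
      intro hd
      exact h (by have := Nat.dvd_add hd (dvd_refl n)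
                  rwa [show k - (n-1) + n = k + 1 by omega] at this)
    · rw [if_neg hC, mul_zero]

lemma deriv_prod (a : ℕ → ℝ) (s : Finset ℕ) (hs : ∀ n ∈ s, 1 ≤ n) :
    d⁄dX ℝ (∏ n ∈ s, binomFactor a n) = (∑ n ∈ s, g a n) * ∏ n ∈ s, binomFactor a n := by
  induction s using Finset.induction_on with
  | empty => simp
  | @insert m s hm ih =>
    rw [Finset.prod_insert hm, Finset.sum_insert hm, Derivation.leibniz,
      smul_eq_mul, smul_eq_mul, ih (fun n hn => hs n (Finset.mem_insert_of_mem hn)),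
      deriv_binomFactor a m (hs m (Finset.mem_insert_self m s))]
    ring

lemma coeff_binom_zero (a : ℕ → ℝ) (n : ℕ) : coeff 0 (binomFactor a n) = 1 := by
  simp [binomFactor, risingFact]

lemma coeff_binom_of_not_dvd (a : ℕ → ℝ) (n k : ℕ) (h : ¬ n ∣ k) :
    coeff k (binomFactor a n) = 0 := by
  simp [binomFactor, h]

lemma stab (a : ℕ → ℝ) (N M : ℕ) (h : N ≤ M) :
    coeff N (∏ n ∈ Finset.Icc 1 M, binomFactor a n)
      = coeff N (∏ n ∈ Finset.Icc 1 N, binomFactor a n) := by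
  induction M, h using Nat.le_induction with
  | base => rfl
  | succ M hM ih =>
    have hins : Finset.Icc 1 (M+1) = insert (M+1) (Finset.Icc 1 M) := by
      ext x; simp [Finset.mem_Icc]; omega
    rw [hins, Finset.prod_insert (by simp), coeff_mul,
      Finset.sum_eq_single (0, N)]
    · rw [coeff_binom_zero, one_mul, ih]
    · rintro ⟨i, j⟩ hij hne
      rw [Finset.HasAntidiagonal.mem_antidiagonal] at hij
      have hi : ¬ (M+1) ∣ i := by
        intro hd
        rcases Nat.eq_zero_or_pos i with rfl | hi0
        · exact hne (by simp [← hij])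
        · exact absurd (Nat.le_of_dvd hi0 hd) (by omega)
      rw [coeff_binom_of_not_dvd a _ _ hi, zero_mul]
    · intro habs
      exact absurd (Finset.HasAntidiagonal.mem_antidiagonal.mpr (by simp)) habs

lemma Lsum (L : ℕ → ℝ) (a : ℕ → ℝ)
    (ha : ∀ n : ℕ, 1 ≤ n →
      a n = (1 / (n : ℝ)) * ∑ d ∈ n.divisors, (ArithmeticFunction.moebius (n / d) : ℝ) * L d)
    (m : ℕ) (hm : 0 < m) :
    ∑ i ∈ m.divisors, (i:ℝ) * a i = L m := by
  refine (sum_eq_iff_sum_mul_moebius_eq (f := fun i => (i:ℝ) * a i) (g := L)).mpr ?_ m hm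
  intro n hn
  rw [Nat.sum_divisorsAntidiagonal' (f := fun d e => (ArithmeticFunction.moebius d : ℝ) * L e), ha n hn]
  have hn0 : (n:ℝ) ≠ 0 := Nat.cast_ne_zero.mpr (by omega)
  field_simp

end Stmt12Aux

namespace Stmt12Aux

lemma recur (L : ℕ → ℝ) (a : ℕ → ℝ)
    (ha : ∀ n : ℕ, 1 ≤ n →
      a n = (1 / (n : ℝ)) * ∑ d ∈ n.divisors, (ArithmeticFunction.moebius (n / d) : ℝ) * L d)
    (N : ℕ) (hN : 1 ≤ N) :
    (N:ℝ) * coeff N (∏ n ∈ Finset.Icc 1 N, binomFactor a n)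
      = ∑ i ∈ Finset.range N,
          L (i+1) * coeff (N-1-i) (∏ n ∈ Finset.Icc 1 N, binomFactor a n) := by
  set P := ∏ n ∈ Finset.Icc 1 N, binomFactor a n with hP
  have hd : d⁄dX ℝ P = (∑ n ∈ Finset.Icc 1 N, g a n) * P :=
    deriv_prod a _ (fun n hn => (Finset.mem_Icc.mp hn).1)
  have h1 : coeff (N-1) (d⁄dX ℝ P) = coeff N P * (N:ℝ) := by
    rw [coeff_derivative, show N-1+1 = N by omega, Nat.cast_sub hN]
    ring_nf
  have h2 : coeff (N-1) ((∑ n ∈ Finset.Icc 1 N, g a n) * P)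
      = ∑ i ∈ Finset.range N, L (i+1) * coeff (N-1-i) P := by
    rw [coeff_mul, Finset.Nat.sum_antidiagonal_eq_sum_range_succ_mk,
      Nat.succ_eq_add_one, show N-1+1 = N by omega]
    refine Finset.sum_congr rfl fun i hi => ?_
    rw [Finset.mem_range] at hi
    congr 1
    rw [map_sum]
    rw [Finset.sum_congr rfl
      (fun n hn => coeff_g a n (Finset.mem_Icc.mp hn).1 i), ← Finset.sum_filter]
    have hfe : (Finset.Icc 1 N).filter (· ∣ i+1) = (i+1).divisors := by
      ext d
      simp only [Finset.mem_filter, Finset.mem_Icc, Nat.mem_divisors]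
      constructor
      · rintro ⟨⟨_, _⟩, hd⟩; exact ⟨hd, by omega⟩
      · rintro ⟨hd, -⟩
        have h0 : 0 < d := Nat.pos_of_dvd_of_pos hd (by omega)
        exact ⟨⟨h0, le_trans (Nat.le_of_dvd (by omega) hd) (by omega)⟩, hd⟩
    rw [hfe, Lsum L a ha (i+1) (by omega)]
  rw [mul_comm, ← h1, hd, h2]

lemma fibsum : ∀ N : ℕ,
    (∑ i ∈ Finset.range N, ((Nat.fib i : ℝ) + Nat.fib (i+2)) * Nat.fib (N-i))
      = N * Nat.fib (N+1)
  | 0 => by simp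
  | 1 => by norm_num
  | (N+2) => by
    have h1 := fibsum N
    have h2 := fibsum (N+1)
    rw [Finset.sum_range_succ, show N+1-N = 1 by omega, show N+1+1 = N+2 from rfl] at h2
    rw [Finset.sum_range_succ, Finset.sum_range_succ,
      show N+2-N = 2 by omega, show N+2-(N+1) = 1 by omega,
      show N+1+2 = N+3 from rfl, show N+2+1 = N+3 from rfl]
    have e1 : ∀ i ∈ Finset.range N,
        ((Nat.fib i : ℝ) + Nat.fib (i+2)) * Nat.fib (N+2-i)
          = ((Nat.fib i : ℝ) + Nat.fib (i+2)) * Nat.fib (N+1-i)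
            + ((Nat.fib i : ℝ) + Nat.fib (i+2)) * Nat.fib (N-i) := by
      intro i hi
      rw [Finset.mem_range] at hi
      have hh : (Nat.fib (N+2-i) : ℝ) = Nat.fib (N+1-i) + Nat.fib (N-i) := by
        rw [show N+2-i = (N-i)+2 by omega, Nat.fib_add_two,
          show N+1-i = (N-i)+1 by omega]
        push_cast; ring
      rw [hh]; ring
    rw [Finset.sum_congr rfl e1, Finset.sum_add_distrib, h1]
    have hf3 : (Nat.fib (N+3):ℝ) = Nat.fib (N+2) + Nat.fib (N+1) := by
      rw [show N+3 = (N+1)+2 from rfl, Nat.fib_add_two]; push_cast; ring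
    simp only [Nat.fib_one, Nat.fib_two, Nat.cast_one, mul_one] at h2 ⊢
    push_cast at h2 ⊢
    linear_combination h2 - ((N:ℝ)+1) * hf3

end Stmt12Aux

theorem stmt12 (L : ℕ → ℝ) (hL1 : L 1 = 1) (hL2 : L 2 = 3)
    (hLrec : ∀ n : ℕ, 3 ≤ n → L n = L (n - 1) + L (n - 2))
    (a : ℕ → ℝ)
    (ha : ∀ n : ℕ, 1 ≤ n →
      a n = (1 / (n : ℝ)) * ∑ d ∈ n.divisors, (ArithmeticFunction.moebius (n / d) : ℝ) * L d) :
    ∀ N : ℕ,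
      PowerSeries.coeff N (∏ n ∈ Finset.Icc 1 N, binomFactor a n) =
        (Nat.fib (N + 1) : ℝ) := by
  have hLfib : ∀ n, 1 ≤ n → L n = (Nat.fib (n-1) : ℝ) + Nat.fib (n+1) := by
    intro n
    induction n using Nat.strong_induction_on with
    | _ n ih =>
      intro hn
      match n, hn with
      | 1, _ => rw [hL1]; norm_num
      | 2, _ => rw [hL2]; norm_num [Nat.fib]
      | (m+3), _ =>
        rw [hLrec (m+3) (by omega), show m+3-1 = m+2 from rfl,
          show m+3-2 = m+1 from rfl,
          ih (m+2) (by omega) (by omega), ih (m+1) (by omega) (by omega),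
          show m+2-1 = m+1 from rfl, show m+2+1 = m+3 from rfl,
          show m+1-1 = m from rfl, show m+1+1 = m+2 from rfl,
          show m+3+1 = m+4 from rfl]
        have a1 : (Nat.fib (m+2):ℝ) = Nat.fib (m+1) + Nat.fib m := by
          rw [Nat.fib_add_two]; push_cast; ring
        have a2 : (Nat.fib (m+4):ℝ) = Nat.fib (m+3) + Nat.fib (m+2) := by
          rw [show m+4 = (m+2)+2 from rfl, Nat.fib_add_two]; push_cast; ring
        linarith [a1, a2]
  intro N
  induction N using Nat.strong_induction_on with
  | _ N ih =>
    rcases Nat.eq_zero_or_pos N with rfl | hN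
    · simp
    · have hrec := Stmt12Aux.recur L a ha N hN
      have hterm : ∀ i ∈ Finset.range N,
          L (i+1) * coeff (N-1-i) (∏ n ∈ Finset.Icc 1 N, binomFactor a n)
            = ((Nat.fib i : ℝ) + Nat.fib (i+2)) * Nat.fib (N-i) := by
        intro i hi
        rw [Finset.mem_range] at hi
        rw [Stmt12Aux.stab a (N-1-i) N (by omega), ih (N-1-i) (by omega),
          hLfib (i+1) (by omega), show i+1-1 = i from rfl,
          show i+1+1 = i+2 from rfl, show N-1-i+1 = N-i by omega]
      rw [Finset.sum_congr rfl hterm, Stmt12Aux.fibsum N] at hrec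
      exact mul_left_cancel₀ (Nat.cast_ne_zero.mpr (by omega : N ≠ 0)) hrec
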